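/- Let k ≥ 3 be an integer, let T be a tournament on {1,…,m} (for every i ≠ j exactly one of the arcs i→j, j→i is present, and there are no loops), and let D be the blow-up of T: the vertex set of D is partitioned into classes V_1, …, V_m with |V_i| = n_i, there are no arcs inside any class, and for i ≠ j every arc from every vertex of V_i to every vertex of V_j is present if and only if T has the arc i→j (and no arcs from V_j to V_i in that case). Then the number of k-subsets of the vertices of D inducing a copy of the directed star S⃗_k equals Σ_{(i,j) : T has arc i→j} n_i · C(n_j, k−1). -/

import Mathlib

open scoped Classical

/-- The number of `k`-element vertex subsets of the digraph `D` (given by its arc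
relation) that induce a copy of the directed star `S⃗ₖ`. -/
noncomputable def starCount (k : ℕ) {V : Type} [Fintype V] (D : V → V → Prop) : ℕ :=
  {S : Finset V | S.card = k ∧
    ∃ v ∈ S, ∀ u ∈ S, ∀ w ∈ S, (D u w ↔ (u = v ∧ w ≠ v))}.ncard

section Aux

set_option linter.unusedSectionVars false

variable {V : Type} [Fintype V] {k m : ℕ} {T : Fin m → Fin m → Prop} {c : V → Fin m}

/-- Uniqueness of the center of a star. -/
lemma center_unique (D : V → V → Prop) (S : Finset V) {v v' : V}
    (hv : v ∈ S) (hv' : v' ∈ S)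
    (h : ∀ u ∈ S, ∀ w ∈ S, (D u w ↔ (u = v ∧ w ≠ v)))
    (h' : ∀ u ∈ S, ∀ w ∈ S, (D u w ↔ (u = v' ∧ w ≠ v'))) : v = v' := by
  by_contra hne
  have h1 : D v v' := (h v hv v' hv').mpr ⟨rfl, fun e => hne e.symm⟩
  exact hne ((h' v hv v' hv').mp h1).1

/-- Converse: from the data we can build a star. -/
lemma star_of (hk : 3 ≤ k)
    (hT_irrefl : ∀ i, ¬ T i i)
    (hT_total : ∀ i j : Fin m, i ≠ j → (T i j ↔ ¬ T j i))
    {v : V} {j : Fin m} (hTj : T (c v) j) {A : Finset V}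
    (hA : ∀ a ∈ A, c a = j) (hAcard : A.card = k - 1) :
    v ∉ A ∧ (insert v A).card = k ∧
      ∀ u ∈ insert v A, ∀ w ∈ insert v A,
        ((c u ≠ c w ∧ T (c u) (c w)) ↔ (u = v ∧ w ≠ v)) := by
  have hcvj : c v ≠ j := fun h => hT_irrefl j (h ▸ hTj)
  have hnback : ¬ T j (c v) := (hT_total _ _ hcvj).mp hTj
  have hvA : v ∉ A := fun h => hcvj (hA v h)
  refine ⟨hvA, ?_, ?_⟩
  · rw [Finset.card_insert_of_notMem hvA, hAcard]
    omega
  · intro u hu w hw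
    rcases Finset.mem_insert.mp hu with hu' | hu' <;>
      rcases Finset.mem_insert.mp hw with hw' | hw'
    · constructor
      · rintro ⟨hne, -⟩
        exact absurd (by rw [hu', hw']) hne
      · rintro ⟨-, h2⟩
        exact absurd hw' h2
    · constructor
      · intro _
        exact ⟨hu', fun h => hvA (h ▸ hw')⟩
      · intro _
        constructor
        · rw [hu', hA w hw']; exact hcvj
        · rw [hu', hA w hw']; exact hTj
    · constructor
      · rintro ⟨-, hT⟩
        rw [hA u hu', hw'] at hT
        exact absurd hT hnback
      · rintro ⟨h, -⟩
        exact absurd (h ▸ hu') hvA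
    · constructor
      · rintro ⟨hne, -⟩
        exact absurd ((hA u hu').trans (hA w hw').symm) hne
      · rintro ⟨h, -⟩
        exact absurd (h ▸ hu') hvA

/-- Structure of a star in the blow-up. -/
lemma star_struct (hk : 3 ≤ k)
    (hT_total : ∀ i j : Fin m, i ≠ j → (T i j ↔ ¬ T j i))
    {S : Finset V} (hcard : S.card = k) {v : V} (hv : v ∈ S)
    (h : ∀ u ∈ S, ∀ w ∈ S, ((c u ≠ c w ∧ T (c u) (c w)) ↔ (u = v ∧ w ≠ v))) :
    (S.erase v).Nonempty ∧
      (∀ a ∈ S.erase v, T (c v) (c a)) ∧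
      ∀ a ∈ S.erase v, ∀ b ∈ S.erase v, c a = c b := by
  have hecard : (S.erase v).card = k - 1 := by rw [Finset.card_erase_of_mem hv, hcard]
  have hne : (S.erase v).Nonempty := by
    rw [← Finset.card_pos, hecard]; omega
  have harc : ∀ a ∈ S.erase v, T (c v) (c a) := by
    intro a ha
    exact ((h v hv a (Finset.mem_of_mem_erase ha)).mpr
      ⟨rfl, Finset.ne_of_mem_erase ha⟩).2
  refine ⟨hne, harc, ?_⟩
  intro a ha b hb
  by_contra hab
  have haS : a ∈ S := Finset.mem_of_mem_erase ha
  have hbS : b ∈ S := Finset.mem_of_mem_erase hb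
  rcases Classical.em (T (c a) (c b)) with hT | hT
  · exact Finset.ne_of_mem_erase ha ((h a haS b hbS).mp ⟨hab, hT⟩).1
  · have hT' : T (c b) (c a) := (hT_total _ _ (Ne.symm hab)).mpr hT
    exact Finset.ne_of_mem_erase hb ((h b hbS a haS).mp ⟨Ne.symm hab, hT'⟩).1

end Aux

/-- In the blow-up of a tournament `T` with class sizes `nn i`, the number of
induced copies of `S⃗ₖ` equals `Σ_{T i j} nn i · C(nn j, k−1)`. -/
theorem starCount_tournament_blowup {V : Type} [Fintype V] (k m : ℕ) (hk : 3 ≤ k)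
    (T : Fin m → Fin m → Prop)
    (hT_irrefl : ∀ i, ¬ T i i)
    (hT_total : ∀ i j : Fin m, i ≠ j → (T i j ↔ ¬ T j i))
    (c : V → Fin m) (nn : Fin m → ℕ)
    (hsize : ∀ i, (Finset.univ.filter fun v => c v = i).card = nn i) :
    starCount k (fun u w => c u ≠ c w ∧ T (c u) (c w)) =
      ∑ i : Fin m, ∑ j : Fin m,
        if T i j then nn i * (nn j).choose (k - 1) else 0 := by
  classical
  set Tgt : Finset ((_ : Fin m × Fin m) × V × Finset V) :=
    (Finset.univ : Finset (Fin m × Fin m)).sigma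
      (fun p => if T p.1 p.2 then
          (Finset.univ.filter fun v => c v = p.1) ×ˢ
            (Finset.univ.filter fun v => c v = p.2).powersetCard (k-1)
        else ∅)
    with hTgt
  -- characterize membership in Tgt
  have hmem : ∀ (i j : Fin m) (v : V) (A : Finset V),
      (⟨(i, j), v, A⟩ : (_ : Fin m × Fin m) × V × Finset V) ∈ Tgt ↔
      (T i j ∧ c v = i ∧ (∀ a ∈ A, c a = j) ∧ A.card = k - 1) := by
    intro i j v A
    rw [hTgt, Finset.mem_sigma]
    by_cases hT : T i j
    · rw [if_pos hT, Finset.mem_product, Finset.mem_powersetCard]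
      constructor
      · rintro ⟨-, hv, hsub, hcA⟩
        exact ⟨hT, (Finset.mem_filter.mp hv).2,
          fun a ha => (Finset.mem_filter.mp (hsub ha)).2, hcA⟩
      · rintro ⟨-, hcv, hA, hcA⟩
        exact ⟨Finset.mem_univ _, Finset.mem_filter.mpr ⟨Finset.mem_univ _, hcv⟩,
          fun a ha => Finset.mem_filter.mpr ⟨Finset.mem_univ _, hA a ha⟩, hcA⟩
    · rw [if_neg hT]
      simp [hT]
  have hmain : Tgt.card = starCount k (fun u w => c u ≠ c w ∧ T (c u) (c w)) := by
    rw [starCount, Set.ncard_eq_toFinset_card', Set.toFinset_setOf]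
    apply Finset.card_nbij (fun a => insert a.2.1 a.2.2)
    · -- maps into stars
      rintro ⟨⟨i, j⟩, v, A⟩ ha
      obtain ⟨hT, hcv, hA, hcA⟩ := (hmem i j v A).mp ha
      obtain ⟨-, hcard, hstar⟩ := star_of hk hT_irrefl hT_total (hcv ▸ hT) hA hcA
      simp only [Finset.mem_coe, Finset.mem_filter, Finset.mem_univ, true_and]
      exact ⟨hcard, v, Finset.mem_insert_self v A, hstar⟩
    · -- injective
      rintro ⟨⟨i₁, j₁⟩, v₁, A₁⟩ ha₁ ⟨⟨i₂, j₂⟩, v₂, A₂⟩ ha₂ heq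
      rw [Finset.mem_coe] at ha₁ ha₂
      obtain ⟨hT₁, hcv₁, hA₁, hcA₁⟩ := (hmem i₁ j₁ v₁ A₁).mp ha₁
      obtain ⟨hT₂, hcv₂, hA₂, hcA₂⟩ := (hmem i₂ j₂ v₂ A₂).mp ha₂
      obtain ⟨hvA₁, hcard₁, hstar₁⟩ := star_of hk hT_irrefl hT_total (hcv₁ ▸ hT₁) hA₁ hcA₁
      obtain ⟨hvA₂, hcard₂, hstar₂⟩ := star_of hk hT_irrefl hT_total (hcv₂ ▸ hT₂) hA₂ hcA₂
      simp only at heq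
      have hv₁ : v₁ ∈ insert v₁ A₁ := Finset.mem_insert_self v₁ A₁
      have hv₂ : v₂ ∈ insert v₁ A₁ := heq ▸ Finset.mem_insert_self v₂ A₂
      have hvv : v₁ = v₂ :=
        center_unique _ (insert v₁ A₁) hv₁ hv₂ hstar₁ (heq ▸ hstar₂)
      have hAA : A₁ = A₂ := by
        have e₁ : (insert v₁ A₁).erase v₁ = A₁ := Finset.erase_insert hvA₁
        have e₂ : (insert v₂ A₂).erase v₂ = A₂ := Finset.erase_insert hvA₂
        rw [← e₁, ← e₂, heq, hvv]
      have hii : i₁ = i₂ := by rw [← hcv₁, ← hcv₂, hvv]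
      have hAne : A₁.Nonempty := by
        rw [← Finset.card_pos, hcA₁]; omega
      obtain ⟨a, haA⟩ := hAne
      have hjj : j₁ = j₂ := by
        rw [← hA₁ a haA, ← hA₂ a (hAA ▸ haA)]
      simp only [Sigma.mk.inj_iff, Prod.mk.injEq, heq_eq_eq]
      exact ⟨⟨hii, hjj⟩, hvv, hAA⟩
    · -- surjective
      rintro S hS
      simp only [Finset.coe_filter, Finset.mem_univ, true_and, Set.mem_setOf_eq] at hS
      obtain ⟨hcard, v, hv, hstar⟩ := hS
      obtain ⟨⟨a0, ha0⟩, harc, hsame⟩ := star_struct hk hT_total hcard hv hstar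
      refine ⟨⟨(c v, c a0), v, S.erase v⟩, ?_, ?_⟩
      · rw [Finset.mem_coe, hmem]
        refine ⟨harc a0 ha0, rfl, fun a ha => hsame a ha a0 ha0, ?_⟩
        rw [Finset.card_erase_of_mem hv, hcard]
      · simpa using Finset.insert_erase hv
  rw [← hmain, hTgt, Finset.card_sigma]
  rw [Fintype.sum_prod_type]
  refine Finset.sum_congr rfl fun i _ => Finset.sum_congr rfl fun j _ => ?_
  by_cases hT : T i j
  · rw [if_pos hT, if_pos hT, Finset.card_product, Finset.card_powersetCard,
      hsize i, hsize j]
  · rw [if_neg hT, if_neg hT, Finset.card_empty]
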